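/- Let f : ℂ × ℂ^{n−1} → ℂ be holomorphic near 0 of the form f(x, y) = Σ_{j ≥ m} a_j(y) xʲ with a_m(0) ≠ 0, where m ≥ 1. Then there exists a holomorphic function φ(x, y) = b_1(y) x + Σ_{j ≥ 2} b_j(y) xʲ, defined near 0, with b_1(y) ≠ 0 for y near 0, such that φ(x, y)^m = f(x, y) identically near 0. -/
import Mathlib


theorem stmt2 (n m : ℕ) (hn : 1 ≤ n) (hm : 1 ≤ m)
    (f g : ℂ × (Fin (n - 1) → ℂ) → ℂ)
    (hg : AnalyticAt ℂ g 0) (hg0 : g 0 ≠ 0)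
    (hf : ∀ᶠ p in nhds (0 : ℂ × (Fin (n - 1) → ℂ)), f p = p.1 ^ m * g p) :
    ∃ b : ℂ × (Fin (n - 1) → ℂ) → ℂ,
      AnalyticAt ℂ b 0 ∧ b 0 ≠ 0 ∧
      (∀ᶠ y in nhds (0 : Fin (n - 1) → ℂ), b (0, y) ≠ 0) ∧
      (∀ᶠ p in nhds (0 : ℂ × (Fin (n - 1) → ℂ)), (p.1 * b p) ^ m = f p) := by
  set c : ℂ := Complex.exp (Complex.log (g 0) / m) with hc
  have hm0 : (m : ℂ) ≠ 0 := Nat.cast_ne_zero.mpr (by omega)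
  have hcm : c ^ m = g 0 := by
    rw [hc, ← Complex.exp_nat_mul, mul_div_cancel₀ _ hm0, Complex.exp_log hg0]
  set b : ℂ × (Fin (n - 1) → ℂ) → ℂ :=
    fun p => c * Complex.exp ((m : ℂ)⁻¹ * Complex.log (g p / g 0)) with hb
  have hbne : ∀ p, b p ≠ 0 := fun p =>
    mul_ne_zero (Complex.exp_ne_zero _) (Complex.exp_ne_zero _)
  have hga : AnalyticAt ℂ (fun p => g p / g 0) 0 := hg.div analyticAt_const hg0
  have hba : AnalyticAt ℂ b 0 := by
    apply analyticAt_const.mul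
    apply AnalyticAt.cexp
    apply analyticAt_const.mul
    apply hga.clog
    simp [div_self hg0, Complex.slitPlane]
  refine ⟨b, hba, hbne 0, Filter.Eventually.of_forall fun y => hbne _, ?_⟩
  have hgne : ∀ᶠ p in nhds (0 : ℂ × (Fin (n - 1) → ℂ)), g p ≠ 0 :=
    hg.continuousAt.eventually_ne hg0
  filter_upwards [hf, hgne] with p hfp hgp
  have hbm : b p ^ m = g p := by
    rw [hb]
    simp only
    rw [mul_pow, hcm, ← Complex.exp_nat_mul, ← mul_assoc,
      mul_inv_cancel₀ hm0, one_mul, Complex.exp_log (div_ne_zero hgp hg0),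
      mul_div_cancel₀ _ hg0]
  rw [mul_pow, hbm, hfp]
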